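/- For every integer k ≥ 2 and every p ∈ (0,1), with c(p) = 1 - 2^{-k} + p·2^{-k} and h(x) = -x·ln(x) - (1-x)·ln(1-x), the quantity k·ln(2) - h(c(p)) - c(p)·ln(2^k - 1) is bounded below by 2^{-k}·(p + (1-p)·ln(1-p)). -/
import Mathlib


/-- For k ≥ 2 and p ∈ (0,1), with c(p) = 1 - 2^{-k} + p·2^{-k} and
h(x) = -x ln x - (1-x) ln(1-x), we have
k ln 2 - h(c(p)) - c(p) ln(2^k - 1) ≥ 2^{-k} (p + (1-p) ln(1-p)). -/
theorem stmt_0 (k : ℕ) (hk : 2 ≤ k) (p : ℝ) (hp : p ∈ Set.Ioo (0:ℝ) 1)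
    (h : ℝ → ℝ) (hh : ∀ x, h x = -x * Real.log x - (1 - x) * Real.log (1 - x))
    (c : ℝ) (hc : c = 1 - (2:ℝ)^(-(k:ℤ)) + p * (2:ℝ)^(-(k:ℤ))) :
    (k : ℝ) * Real.log 2 - h c - c * Real.log ((2:ℝ)^k - 1) ≥
      (2:ℝ)^(-(k:ℤ)) * (p + (1 - p) * Real.log (1 - p)) := by
  obtain ⟨hp0, hp1⟩ := hp
  set q : ℝ := (2:ℝ)^(-(k:ℤ)) with hq
  have h2k : (1:ℝ) < (2:ℝ)^k := by
    have : (2:ℝ)^0 < (2:ℝ)^k := by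
      apply pow_lt_pow_right₀ (by norm_num) (by omega)
    simpa using this
  have hqinv : q = ((2:ℝ)^k)⁻¹ := by rw [hq, zpow_neg, zpow_natCast]
  have hq0 : 0 < q := by rw [hqinv]; positivity
  have hq1 : q < 1 := by
    rw [hqinv]
    exact inv_lt_one_of_one_lt₀ h2k
  have hlogq : Real.log q = -((k:ℝ) * Real.log 2) := by
    rw [hq, Real.log_zpow]; push_cast; ring
  have h1c : 1 - c = q * (1 - p) := by rw [hc]; ring
  have hc1 : c < 1 := by nlinarith [mul_pos hq0 (sub_pos.2 hp1)]
  have hc0 : 0 < c := by nlinarith [mul_pos hq0 hp0]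
  have hlog1c : Real.log (1 - c) = Real.log q + Real.log (1 - p) := by
    rw [h1c, Real.log_mul hq0.ne' (by linarith)]
  have hlog2k : Real.log ((2:ℝ)^k - 1) = Real.log (1 - q) - Real.log q := by
    have h2 : (2:ℝ)^k - 1 = (1 - q) / q := by
      rw [hqinv]; field_simp
    rw [h2, Real.log_div (by nlinarith) hq0.ne']
  -- key inequality: c * (log c - log(1-q)) ≥ p*q
  have hx : Real.log ((1 - q) / c) ≤ (1 - q) / c - 1 :=
    Real.log_le_sub_one_of_pos (div_pos (by linarith) hc0)
  rw [Real.log_div (by linarith) hc0.ne'] at hx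
  have hM : c * (Real.log (1 - q) - Real.log c) ≤ c * ((1 - q) / c - 1) :=
    mul_le_mul_of_nonneg_left hx hc0.le
  have hd : c * ((1 - q) / c - 1) = (1 - q) - c := by field_simp
  have h6 : c * Real.log c - c * Real.log (1 - q) ≥ p * q := by nlinarith [hM, hd]
  have hEq : (k:ℝ) * Real.log 2 - (-c * Real.log c - (1 - c) * (Real.log q + Real.log (1 - p)))
      - c * (Real.log (1 - q) - Real.log q) - q * (p + (1 - p) * Real.log (1 - p))
      = (c * Real.log c - c * Real.log (1 - q)) - p * q := by
    linear_combination hlogq + Real.log (1 - p) * h1c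
  rw [hh c, hlog1c, hlog2k]
  linarith [hEq, h6]
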